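/- For every k ∈ [1:K], the zero-padded MOSES iterate Ŷ_{k,r} ∈ ℝ^{n×Kb} satisfies Ŷ_{k,r} = Y_K P_{Q̂_{k,r}}, where Q̂_{k,r} = span(Ŷ_{k,r}*) is the row space of Ŷ_{k,r}; equivalently, Ŷ_{k−1,r} + Y_k P_{I_k} = Y_K P_{Q̃_k}, where Q̃_k = Q̂_{k−1,r} ⊕ I_k. In particular the MOSES update rule can be written as Y_K P_{Q̂_{k,r}} = SVD_r(Y_K P_{Q̃_k}) for k ∈ [2:K]. Moreover, the inclusions Q̂_{k,r} ⊆ Q̃_k ⊆ J_k hold, where J_k = I_1 ⊕ … ⊕ I_k. -/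

import Mathlib

open MeasureTheory ProbabilityTheory Matrix

noncomputable def frobNorm {n m : ℕ} (A : Matrix (Fin n) (Fin m) ℝ) : ℝ :=
  Real.sqrt (∑ i, ∑ j, (A i j) ^ 2)

noncomputable def frobInner {n m : ℕ} (A B : Matrix (Fin n) (Fin m) ℝ) : ℝ :=
  ∑ i, ∑ j, A i j * B i j

noncomputable def specNorm {n m : ℕ} (A : Matrix (Fin n) (Fin m) ℝ) : ℝ :=
  ‖LinearMap.toContinuousLinearMap (Matrix.toEuclideanLin A)‖

noncomputable def singularValue {n m : ℕ} (A : Matrix (Fin n) (Fin m) ℝ) (i : Fin n) : ℝ :=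
  Real.sqrt ((Matrix.isHermitian_mul_conjTranspose_self A).eigenvalues
    (Tuple.sort (Matrix.isHermitian_mul_conjTranspose_self A).eigenvalues i.rev))

noncomputable def residualSq {n m : ℕ} (r : ℕ) (A : Matrix (Fin n) (Fin m) ℝ) : ℝ :=
  ∑ i : Fin n, if r ≤ (i : ℕ) then (singularValue A i) ^ 2 else 0

def IsTruncSVD {n m : ℕ} (r : ℕ) (A Ar : Matrix (Fin n) (Fin m) ℝ) : Prop :=
  Ar.rank ≤ r ∧ ∀ B : Matrix (Fin n) (Fin m) ℝ, B.rank ≤ r →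
    frobNorm (A - Ar) ≤ frobNorm (A - B)

noncomputable def colSpan {n m : ℕ} (A : Matrix (Fin n) (Fin m) ℝ) :
    Submodule ℝ (EuclideanSpace ℝ (Fin n)) :=
  Submodule.span ℝ (Set.range fun j : Fin m =>
    ((WithLp.equiv 2 (Fin n → ℝ)).symm fun i => A i j))

noncomputable def rowSpan {n m : ℕ} (A : Matrix (Fin n) (Fin m) ℝ) :
    Submodule ℝ (EuclideanSpace ℝ (Fin m)) := colSpan Aᵀ

noncomputable def projMatrix {n : ℕ} (U : Submodule ℝ (EuclideanSpace ℝ (Fin n))) :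
    Matrix (Fin n) (Fin n) ℝ :=
  Matrix.of fun i j =>
    (U.orthogonalProjection (EuclideanSpace.single j 1) : EuclideanSpace ℝ (Fin n)) i

noncomputable def coordSubspace {M : ℕ} (s t : ℕ) : Submodule ℝ (EuclideanSpace ℝ (Fin M)) :=
  Submodule.span ℝ ((fun j : Fin M => (EuclideanSpace.single j (1:ℝ))) ''
    {j : Fin M | s ≤ (j : ℕ) ∧ (j : ℕ) < t})

def padTrunc {n M : ℕ} (A : Matrix (Fin n) (Fin M) ℝ) (m : ℕ) :
    Matrix (Fin n) (Fin M) ℝ :=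
  Matrix.of fun i j => if (j : ℕ) < m then A i j else 0

def IsMOSES {n M : ℕ} (r b K : ℕ) (Y : Matrix (Fin n) (Fin M) ℝ)
    (Yhat : ℕ → Matrix (Fin n) (Fin M) ℝ) : Prop :=
  Yhat 0 = 0 ∧ ∀ k, 1 ≤ k → k ≤ K →
    IsTruncSVD r (Yhat (k - 1) + (padTrunc Y (k * b) - padTrunc Y ((k - 1) * b))) (Yhat k)

noncomputable def stdGaussianSeq (n m : ℕ) : Measure (Fin n → Fin m → ℝ) :=
  Measure.pi fun _ => Measure.pi fun _ => gaussianReal 0 1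

noncomputable def gaussianOfRoot {n : ℕ} (A : Matrix (Fin n) (Fin n) ℝ) :
    Measure (EuclideanSpace ℝ (Fin n)) :=
  (Measure.pi fun _ : Fin n => gaussianReal 0 1).map
    (fun g => (WithLp.equiv 2 (Fin n → ℝ)).symm (A.mulVec g))


lemma single_decomp {n : ℕ} (v : EuclideanSpace ℝ (Fin n)) :
    v = ∑ j, v j • EuclideanSpace.single j (1:ℝ) := by
  ext i
  rw [show ((∑ j, v j • EuclideanSpace.single j (1:ℝ)) i = ∑ j, (v j • EuclideanSpace.single j (1:ℝ)) i) from by rw [WithLp.ofLp_sum, Finset.sum_apply]]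
  simp [EuclideanSpace.single_apply]

lemma projMatrix_mulVec {n : ℕ} (U : Submodule ℝ (EuclideanSpace ℝ (Fin n)))
    (v : EuclideanSpace ℝ (Fin n)) :
    (projMatrix U) *ᵥ (v : Fin n → ℝ) = (Submodule.orthogonalProjection U v : EuclideanSpace ℝ (Fin n)) := by
  conv_rhs => rw [single_decomp v]
  rw [map_sum, Submodule.coe_sum]
  funext i
  rw [show ((((∑ j, ((Submodule.orthogonalProjection U (v j • EuclideanSpace.single j (1:ℝ))) : EuclideanSpace ℝ (Fin n))) : EuclideanSpace ℝ (Fin n))) i = ∑ j, ((Submodule.orthogonalProjection U (v j • EuclideanSpace.single j (1:ℝ))) : EuclideanSpace ℝ (Fin n)) i) from by rw [WithLp.ofLp_sum, Finset.sum_apply]]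
  simp only [_root_.map_smul, mulVec, dotProduct, projMatrix, Matrix.of_apply]
  apply Finset.sum_congr rfl
  intro j _
  simp [mul_comm]

lemma euclid_inner {n : ℕ} (x y : EuclideanSpace ℝ (Fin n)) :
    (inner ℝ x y : ℝ) = ∑ i, x i * y i := by
  simp [PiLp.inner_apply, RCLike.inner_apply, mul_comm]

lemma inner_single_r {n : ℕ} (x : EuclideanSpace ℝ (Fin n)) (j : Fin n) :
    (inner ℝ x (EuclideanSpace.single j (1:ℝ)) : ℝ) = x j := by
  rw [EuclideanSpace.inner_single_right]; simp

lemma projMatrix_transpose {n : ℕ} (U : Submodule ℝ (EuclideanSpace ℝ (Fin n))) :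
    (projMatrix U)ᵀ = projMatrix U := by
  ext i j
  show (Submodule.orthogonalProjection U (EuclideanSpace.single i 1) : EuclideanSpace ℝ (Fin n)) j
    = (Submodule.orthogonalProjection U (EuclideanSpace.single j 1) : EuclideanSpace ℝ (Fin n)) i
  rw [← inner_single_r ((Submodule.orthogonalProjection U (EuclideanSpace.single i 1) : EuclideanSpace ℝ (Fin n))) j,
    (show inner ℝ ((Submodule.orthogonalProjection U (EuclideanSpace.single i 1) : EuclideanSpace ℝ (Fin n))) (EuclideanSpace.single j 1)
      = inner ℝ (EuclideanSpace.single i 1) ((Submodule.orthogonalProjection U (EuclideanSpace.single j 1) : EuclideanSpace ℝ (Fin n))) from U.inner_starProjection_left_eq_right _ _)]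
  rw [real_inner_comm, inner_single_r]

lemma mat_eq_of_mulVec {n m : ℕ} {A B : Matrix (Fin n) (Fin m) ℝ}
    (h : ∀ v, A *ᵥ v = B *ᵥ v) : A = B := by
  ext i j
  have := congrFun (h (Pi.single j 1)) i
  simpa [mulVec_single] using this

lemma projMatrix_mul_projMatrix {n : ℕ} {U V : Submodule ℝ (EuclideanSpace ℝ (Fin n))}
    (h : U ≤ V) : projMatrix V * projMatrix U = projMatrix U := by
  apply mat_eq_of_mulVec
  intro v
  rw [← mulVec_mulVec, projMatrix_mulVec, projMatrix_mulVec]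
  exact congrArg WithLp.ofLp ((Submodule.starProjection_eq_self_iff (𝕜 := ℝ) (E := EuclideanSpace ℝ (Fin n)) (K := V)).2 (h (Submodule.coe_mem _)))

lemma projMatrix_idem {n : ℕ} (U : Submodule ℝ (EuclideanSpace ℝ (Fin n))) :
    projMatrix U * projMatrix U = projMatrix U := projMatrix_mul_projMatrix le_rfl

lemma projMatrix_symm {n : ℕ} (U : Submodule ℝ (EuclideanSpace ℝ (Fin n))) (i j : Fin n) :
    projMatrix U i j = projMatrix U j i := by
  conv_lhs => rw [← projMatrix_transpose]
  rfl

lemma mul_projMatrix_row {n m : ℕ} (X : Matrix (Fin n) (Fin m) ℝ)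
    (U : Submodule ℝ (EuclideanSpace ℝ (Fin m))) (i : Fin n) :
    (X * projMatrix U) i = (Submodule.orthogonalProjection U ((WithLp.equiv 2 (Fin m → ℝ)).symm (X i)) : EuclideanSpace ℝ (Fin m)) := by
  rw [← projMatrix_mulVec]
  funext j
  simp only [Matrix.mul_apply, Matrix.mulVec, dotProduct, WithLp.equiv_symm_apply, WithLp.ofLp_toLp]
  exact Finset.sum_congr rfl fun x _ => by rw [projMatrix_symm U j x, mul_comm]
-- rows generate rowSpan
lemma row_mem_rowSpan {n m : ℕ} (A : Matrix (Fin n) (Fin m) ℝ) (i : Fin n) :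
    ((WithLp.equiv 2 (Fin m → ℝ)).symm (A i)) ∈ rowSpan A :=
  Submodule.subset_span ⟨i, rfl⟩

lemma rowSpan_le_iff {n m : ℕ} (A : Matrix (Fin n) (Fin m) ℝ)
    (U : Submodule ℝ (EuclideanSpace ℝ (Fin m))) :
    rowSpan A ≤ U ↔ A * projMatrix U = A := by
  constructor
  · intro h
    ext i j
    exact congrFun ((mul_projMatrix_row A U i).trans (congrArg WithLp.ofLp
      ((Submodule.starProjection_eq_self_iff (𝕜 := ℝ) (E := EuclideanSpace ℝ (Fin m)) (K := U)
        (v := (WithLp.equiv 2 (Fin m → ℝ)).symm (A i))).2 (h (row_mem_rowSpan A i))))) j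
  · intro h
    apply Submodule.span_le.2
    rintro x ⟨i, rfl⟩
    show ((WithLp.equiv 2 (Fin m → ℝ)).symm (A i)) ∈ (U : Set (EuclideanSpace ℝ (Fin m)))
    have h2 : (WithLp.equiv 2 (Fin m → ℝ)).symm (A i)
        = (Submodule.orthogonalProjection U ((WithLp.equiv 2 (Fin m → ℝ)).symm (A i)) : EuclideanSpace ℝ (Fin m)) :=
      (congrArg (fun B : Matrix (Fin n) (Fin m) ℝ => (WithLp.equiv 2 (Fin m → ℝ)).symm (B i)) h).symm.trans
        (congrArg (WithLp.equiv 2 (Fin m → ℝ)).symm (mul_projMatrix_row A U i))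
    rw [h2]
    exact Submodule.coe_mem _

lemma pythagoras {n m : ℕ} (X : Matrix (Fin n) (Fin m) ℝ)
    (U : Submodule ℝ (EuclideanSpace ℝ (Fin m))) :
    (∑ i, ∑ j, X i j ^ 2)
      = (∑ i, ∑ j, ((X * projMatrix U) i j) ^ 2)
        + ∑ i, ∑ j, ((X - X * projMatrix U) i j) ^ 2 := by
  rw [← Finset.sum_add_distrib]
  refine Finset.sum_congr rfl fun i _ => ?_
  set p : EuclideanSpace ℝ (Fin m) :=
    (Submodule.orthogonalProjection U ((WithLp.equiv 2 (Fin m → ℝ)).symm (X i)) : EuclideanSpace ℝ (Fin m)) with hp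
  have hrow : ∀ j, (X * projMatrix U) i j = p j := fun j =>
    congrFun (mul_projMatrix_row X U i) j
  have hsub : ∀ j, (X - X * projMatrix U) i j = X i j - p j := fun j => by
    rw [Matrix.sub_apply, hrow j]
  have hzero : ∑ j, (X i j - p j) * p j = 0 := by
    have h0 := Submodule.starProjection_inner_eq_zero
      ((WithLp.equiv 2 (Fin m → ℝ)).symm (X i)) p (Submodule.coe_mem _)
    rw [euclid_inner] at h0
    rw [← h0]
    exact Finset.sum_congr rfl fun j _ => by simp [hp]
  have expand : ∀ j, X i j ^ 2
      = (((X * projMatrix U) i j) ^ 2 + ((X - X * projMatrix U) i j) ^ 2)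
        + 2 * ((X i j - p j) * p j) := fun j => by
    rw [hrow j, hsub j]; ring
  rw [Finset.sum_congr rfl fun j _ => expand j, Finset.sum_add_distrib, ← Finset.mul_sum,
    hzero, mul_zero, add_zero, Finset.sum_add_distrib]

lemma sumSq_le_zero {n m : ℕ} {Z : Matrix (Fin n) (Fin m) ℝ}
    (h : (∑ i, ∑ j, Z i j ^ 2) ≤ 0) : Z = 0 := by
  have h0 : ∀ i ∈ Finset.univ, (0:ℝ) ≤ ∑ j, Z i j ^ 2 := fun i _ =>
    Finset.sum_nonneg fun j _ => sq_nonneg _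
  have := (Finset.sum_eq_zero_iff_of_nonneg h0).1
    (le_antisymm h (Finset.sum_nonneg h0))
  ext i j
  have := (Finset.sum_eq_zero_iff_of_nonneg (fun j _ => sq_nonneg (Z i j))).1
    (this i (Finset.mem_univ i)) j (Finset.mem_univ j)
  simpa using pow_eq_zero_iff (n := 2) (by norm_num) |>.1 this

lemma frob_sq_le {n m : ℕ} {A B : Matrix (Fin n) (Fin m) ℝ}
    (h : frobNorm A ≤ frobNorm B) : (∑ i, ∑ j, A i j ^ 2) ≤ ∑ i, ∑ j, B i j ^ 2 :=
  (Real.sqrt_le_sqrt_iff (Finset.sum_nonneg fun i _ =>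
    Finset.sum_nonneg fun j _ => sq_nonneg _)).1 h

lemma truncSVD_absorb {n m : ℕ} {r : ℕ} {A Ahat : Matrix (Fin n) (Fin m) ℝ}
    {U : Submodule ℝ (EuclideanSpace ℝ (Fin m))}
    (hA : A * projMatrix U = A) (h : IsTruncSVD r A Ahat) :
    Ahat * projMatrix U = Ahat := by
  have hrank : (Ahat * projMatrix U).rank ≤ r := le_trans (Matrix.rank_mul_le_left _ _) h.1
  have hmin := h.2 (Ahat * projMatrix U) hrank
  have hXP : A - Ahat * projMatrix U = (A - Ahat) * projMatrix U := by
    rw [Matrix.sub_mul, hA]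
  rw [hXP] at hmin
  have hsq := frob_sq_le hmin
  have hpyth := pythagoras (A - Ahat) U
  have hz : (A - Ahat) - (A - Ahat) * projMatrix U = 0 :=
    sumSq_le_zero (by linarith)
  have h4 : A - Ahat * projMatrix U = A - Ahat := hXP.trans (sub_eq_zero.mp hz).symm
  calc Ahat * projMatrix U = A - (A - Ahat * projMatrix U) := (sub_sub_cancel _ _).symm
    _ = A - (A - Ahat) := by rw [h4]
    _ = Ahat := sub_sub_cancel _ _

lemma range_mulVecLin_projMatrix {n : ℕ} (U : Submodule ℝ (EuclideanSpace ℝ (Fin n))) :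
    LinearMap.range (projMatrix U).mulVecLin
      = U.map (WithLp.linearEquiv 2 ℝ (Fin n → ℝ)).toLinearMap := by
  ext w
  simp only [LinearMap.mem_range, Submodule.mem_map]
  constructor
  · rintro ⟨v, rfl⟩
    refine ⟨(Submodule.orthogonalProjection U ((WithLp.equiv 2 (Fin n → ℝ)).symm v) : EuclideanSpace ℝ (Fin n)),
      Submodule.coe_mem _, ?_⟩
    exact (projMatrix_mulVec U ((WithLp.equiv 2 (Fin n → ℝ)).symm v)).symm
  · rintro ⟨u, hu, rfl⟩
    refine ⟨(WithLp.equiv 2 (Fin n → ℝ)) u, ?_⟩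
    have := projMatrix_mulVec U u
    rw [show (Submodule.orthogonalProjection U u : EuclideanSpace ℝ (Fin n)) = u from Submodule.starProjection_eq_self_iff.2 hu] at this
    exact this

lemma rank_projMatrix {n : ℕ} (U : Submodule ℝ (EuclideanSpace ℝ (Fin n))) :
    (projMatrix U).rank = Module.finrank ℝ U := by
  rw [Matrix.rank, range_mulVecLin_projMatrix]
  exact LinearEquiv.finrank_map_eq _ _

lemma colSpan_eq_map {n m : ℕ} (A : Matrix (Fin n) (Fin m) ℝ) :
    colSpan A = (Submodule.span ℝ (Set.range A.col)).map
      ((WithLp.linearEquiv 2 ℝ (Fin n → ℝ)).symm.toLinearMap) := by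
  rw [Submodule.map_span, ← Set.range_comp]
  rfl

lemma finrank_rowSpan {n m : ℕ} (A : Matrix (Fin n) (Fin m) ℝ) :
    Module.finrank ℝ (rowSpan A) = A.rank := by
  rw [rowSpan, colSpan_eq_map, LinearEquiv.finrank_map_eq, ← Matrix.range_mulVecLin,
    ← Matrix.rank, Matrix.rank_transpose]

lemma truncSVD_eq_proj {n m r : ℕ} {A Ahat : Matrix (Fin n) (Fin m) ℝ}
    (h : IsTruncSVD r A Ahat) :
    A * projMatrix (rowSpan Ahat) = Ahat := by
  set Q := projMatrix (rowSpan Ahat) with hQ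
  have hfix : Ahat * Q = Ahat := (rowSpan_le_iff Ahat _).1 le_rfl
  have hrank : (A * Q).rank ≤ r := by
    refine le_trans (Matrix.rank_mul_le_right _ _) ?_
    rw [hQ, rank_projMatrix, finrank_rowSpan]
    exact h.1
  have hmin := h.2 (A * Q) hrank
  have hXQ : A - A * Q = (A - Ahat) - (A - Ahat) * Q := by
    rw [Matrix.sub_mul, hfix]; abel
  rw [hXQ] at hmin
  have hsq := frob_sq_le hmin
  have hpyth := pythagoras (A - Ahat) (rowSpan Ahat)
  have hz : (A - Ahat) * Q = 0 := sumSq_le_zero (by linarith)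
  have : A * Q - Ahat = 0 := by
    rw [← hfix, ← Matrix.sub_mul]; exact hz
  rw [sub_eq_zero] at this
  exact this

lemma coord_proj_apply {M : ℕ} (s t : ℕ) (v : EuclideanSpace ℝ (Fin M)) :
    (Submodule.orthogonalProjection (coordSubspace s t) v : EuclideanSpace ℝ (Fin M))
      = (WithLp.equiv 2 (Fin M → ℝ)).symm
          (fun i => if s ≤ (i : ℕ) ∧ (i : ℕ) < t then v i else 0) := by
  apply Submodule.eq_starProjection_of_mem_of_inner_eq_zero
  · have : (WithLp.equiv 2 (Fin M → ℝ)).symm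
        (fun i => if s ≤ (i : ℕ) ∧ (i : ℕ) < t then v i else 0)
        = ∑ i : Fin M, if s ≤ (i : ℕ) ∧ (i : ℕ) < t then v i • EuclideanSpace.single i (1:ℝ) else 0 := by
      ext j
      rw [show ((∑ i : Fin M, if s ≤ (i : ℕ) ∧ (i : ℕ) < t then v i • EuclideanSpace.single i (1:ℝ) else 0) j
        = ∑ i : Fin M, (if s ≤ (i : ℕ) ∧ (i : ℕ) < t then v i • EuclideanSpace.single i (1:ℝ) else 0) j) from
        by rw [WithLp.ofLp_sum, Finset.sum_apply]]
      show (if s ≤ (j:ℕ) ∧ (j:ℕ) < t then v j else 0) = _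
      simp only [apply_ite (fun w : EuclideanSpace ℝ (Fin M) => w j), PiLp.smul_apply,
        EuclideanSpace.single_apply, smul_eq_mul, mul_ite, mul_one, mul_zero, PiLp.zero_apply]
      rw [Finset.sum_congr rfl (fun (x : Fin M) _ => show (if s ≤ (x:ℕ) ∧ (x:ℕ) < t then if j = x then v x else 0 else 0)
        = (if j = x then (if s ≤ (x:ℕ) ∧ (x:ℕ) < t then v x else 0) else 0) from by
          by_cases h1 : j = x <;> by_cases h2 : s ≤ (x:ℕ) ∧ (x:ℕ) < t <;> simp [h1, h2]),
        Finset.sum_ite_eq Finset.univ j (fun (x : Fin M) => if s ≤ (x:ℕ) ∧ (x:ℕ) < t then v x else 0),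
        if_pos (Finset.mem_univ j)]
    rw [this]
    refine Submodule.sum_mem _ fun i _ => ?_
    by_cases hi : s ≤ (i : ℕ) ∧ (i : ℕ) < t
    · rw [if_pos hi]
      exact Submodule.smul_mem _ _ (Submodule.subset_span ⟨i, hi, rfl⟩)
    · rw [if_neg hi]; exact Submodule.zero_mem _
  · intro w hw
    induction hw using Submodule.span_induction with
    | mem x hx =>
      obtain ⟨j, hj, rfl⟩ := hx
      rw [inner_single_r]
      show v j - (if s ≤ (j:ℕ) ∧ (j:ℕ) < t then v j else 0) = 0
      rw [if_pos (show s ≤ (j:ℕ) ∧ (j:ℕ) < t from hj), sub_self]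
    | zero => exact inner_zero_right _
    | add x y _ _ hx hy => rw [inner_add_right, hx, hy, add_zero]
    | smul c x _ hx => rw [inner_smul_right, hx, mul_zero]

lemma proj_sup_of_ortho {n : ℕ} {U V : Submodule ℝ (EuclideanSpace ℝ (Fin n))}
    (h : U ⟂ V) (v : EuclideanSpace ℝ (Fin n)) :
    (Submodule.orthogonalProjection (U ⊔ V) v : EuclideanSpace ℝ (Fin n))
      = (Submodule.orthogonalProjection U v : EuclideanSpace ℝ (Fin n))
        + (Submodule.orthogonalProjection V v : EuclideanSpace ℝ (Fin n)) := by
  apply Submodule.eq_starProjection_of_mem_of_inner_eq_zero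
  · exact Submodule.add_mem _ (Submodule.mem_sup_left (Submodule.coe_mem _))
      (Submodule.mem_sup_right (Submodule.coe_mem _))
  · intro w hw
    obtain ⟨x, hx, y, hy, rfl⟩ := Submodule.mem_sup.1 hw
    have h1 : inner ℝ (v - (Submodule.orthogonalProjection U v : EuclideanSpace ℝ (Fin n))) x = 0 := Submodule.starProjection_inner_eq_zero v x hx
    have h2 : inner ℝ (v - (Submodule.orthogonalProjection V v : EuclideanSpace ℝ (Fin n))) y = 0 := Submodule.starProjection_inner_eq_zero v y hy
    have h3 : (inner ℝ ((Submodule.orthogonalProjection V v : EuclideanSpace ℝ (Fin n))) x : ℝ) = 0 :=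
      Submodule.IsOrtho.inner_eq h.symm (Submodule.coe_mem _) hx
    have h4 : (inner ℝ ((Submodule.orthogonalProjection U v : EuclideanSpace ℝ (Fin n))) y : ℝ) = 0 :=
      Submodule.IsOrtho.inner_eq h (Submodule.coe_mem _) hy
    have e1 : v - ((Submodule.orthogonalProjection U v : EuclideanSpace ℝ (Fin n))
        + (Submodule.orthogonalProjection V v : EuclideanSpace ℝ (Fin n)))
        = (v - (Submodule.orthogonalProjection U v : EuclideanSpace ℝ (Fin n)))
          - (Submodule.orthogonalProjection V v : EuclideanSpace ℝ (Fin n)) := by abel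
    rw [inner_sub_left] at h1 h2
    rw [e1, inner_add_right]
    simp only [inner_sub_left]
    linarith

lemma projMatrix_sup_of_ortho {n : ℕ} {U V : Submodule ℝ (EuclideanSpace ℝ (Fin n))}
    (h : U ⟂ V) : projMatrix (U ⊔ V) = projMatrix U + projMatrix V := by
  ext i j
  show (Submodule.orthogonalProjection (U ⊔ V) (EuclideanSpace.single j 1) : EuclideanSpace ℝ (Fin n)) i = _
  rw [proj_sup_of_ortho h]
  rfl

lemma coord_ortho {M : ℕ} (a t : ℕ) : (coordSubspace 0 a : Submodule ℝ (EuclideanSpace ℝ (Fin M))) ⟂ coordSubspace a t := by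
  rw [coordSubspace, coordSubspace, Submodule.isOrtho_span]
  rintro u ⟨j, hj, rfl⟩ w ⟨j', hj', rfl⟩
  rw [inner_single_r]
  show (EuclideanSpace.single j (1:ℝ)) j' = 0
  rw [EuclideanSpace.single_apply, if_neg]
  intro hjj
  have h1 : a ≤ (j:ℕ) := hjj ▸ (hj'.1 : a ≤ (j':ℕ))
  exact absurd h1 (not_le.2 (hj.2 : (j:ℕ) < a))

lemma coordSubspace_mono {M : ℕ} {s t t' : ℕ} (h : t ≤ t') :
    (coordSubspace s t : Submodule ℝ (EuclideanSpace ℝ (Fin M))) ≤ coordSubspace s t' :=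
  Submodule.span_mono (Set.image_mono fun j hj => ⟨hj.1, lt_of_lt_of_le hj.2 h⟩)

lemma coordSubspace_mono_left {M : ℕ} {s s' t : ℕ} (h : s' ≤ s) :
    (coordSubspace s t : Submodule ℝ (EuclideanSpace ℝ (Fin M))) ≤ coordSubspace s' t :=
  Submodule.span_mono (Set.image_mono fun j hj => ⟨le_trans h hj.1, hj.2⟩)

lemma rowSpan_zero {n m : ℕ} : rowSpan (0 : Matrix (Fin n) (Fin m) ℝ) = ⊥ := by
  refine le_antisymm ?_ bot_le
  rw [rowSpan, colSpan]
  apply Submodule.span_le.2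
  rintro x ⟨j, rfl⟩
  show (0 : EuclideanSpace ℝ (Fin m)) ∈ (⊥ : Submodule ℝ (EuclideanSpace ℝ (Fin m)))
  exact Submodule.zero_mem ⊥

lemma projMatrix_bot {n : ℕ} : projMatrix (⊥ : Submodule ℝ (EuclideanSpace ℝ (Fin n))) = 0 := by
  ext i j
  simp [projMatrix]

-- projMatrix of coordSubspace is "diagonal indicator"
lemma projMatrix_coord {M : ℕ} (s t : ℕ) (i j : Fin M) :
    projMatrix (coordSubspace s t : Submodule ℝ (EuclideanSpace ℝ (Fin M))) i j
      = if i = j ∧ s ≤ (i : ℕ) ∧ (i : ℕ) < t then 1 else 0 := by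
  show (Submodule.orthogonalProjection (coordSubspace s t) (EuclideanSpace.single j 1) : EuclideanSpace ℝ (Fin M)) i = _
  rw [coord_proj_apply]
  show (if s ≤ (i:ℕ) ∧ (i:ℕ) < t then (EuclideanSpace.single j (1:ℝ)) i else 0) = _
  rw [EuclideanSpace.single_apply]
  by_cases h1 : i = j <;> by_cases h2 : s ≤ (i:ℕ) ∧ (i:ℕ) < t <;> simp [h1, h2]

lemma mul_projMatrix_coord {n M : ℕ} (X : Matrix (Fin n) (Fin M) ℝ) (s t : ℕ) (i : Fin n) (j : Fin M) :
    (X * projMatrix (coordSubspace s t : Submodule ℝ (EuclideanSpace ℝ (Fin M))) : Matrix (Fin n) (Fin M) ℝ) i j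
      = if s ≤ (j : ℕ) ∧ (j : ℕ) < t then X i j else 0 := by
  rw [Matrix.mul_apply]
  simp only [projMatrix_coord]
  have hterm : ∀ l : Fin M, X i l * (if l = j ∧ s ≤ (l:ℕ) ∧ (l:ℕ) < t then (1:ℝ) else 0)
      = if l = j then (if s ≤ (l:ℕ) ∧ (l:ℕ) < t then X i l else 0) else 0 := fun l => by
    by_cases h1 : l = j <;> by_cases h2 : s ≤ (l:ℕ) ∧ (l:ℕ) < t <;> simp [h1, h2]
  rw [Finset.sum_congr rfl fun l _ => hterm l,
    Finset.sum_ite_eq' Finset.univ j (fun (l : Fin M) => if s ≤ (l:ℕ) ∧ (l:ℕ) < t then X i l else 0),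
    if_pos (Finset.mem_univ j)]


lemma pad_diff {n M : ℕ} (Y : Matrix (Fin n) (Fin M) ℝ) (a c : ℕ) (hac : a ≤ c) :
    padTrunc Y c - padTrunc Y a = Y * projMatrix (coordSubspace a c) := by
  ext i j
  rw [Matrix.sub_apply]; refine Eq.trans ?_ (mul_projMatrix_coord Y a c i j).symm
  show (if (j:ℕ) < c then Y i j else 0) - (if (j:ℕ) < a then Y i j else 0) = _
  by_cases h1 : (j:ℕ) < a
  · rw [if_pos h1, if_pos (lt_of_lt_of_le h1 hac),
      if_neg (fun hc => absurd h1 (not_lt.2 hc.1)), sub_self]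
  · rw [if_neg h1, sub_zero]
    by_cases h2 : (j:ℕ) < c
    · rw [if_pos h2, if_pos ⟨not_lt.1 h1, h2⟩]
    · rw [if_neg h2, if_neg (fun hc => absurd hc.2 h2)]

lemma pad_mul_coord {n M : ℕ} (Y : Matrix (Fin n) (Fin M) ℝ) (a c : ℕ) :
    padTrunc Y c * projMatrix (coordSubspace a c) = Y * projMatrix (coordSubspace a c) := by
  ext i j
  refine (mul_projMatrix_coord _ a c i j).trans (Eq.trans ?_ (mul_projMatrix_coord Y a c i j).symm)
  by_cases h : a ≤ (j:ℕ) ∧ (j:ℕ) < c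
  · rw [if_pos h, if_pos h]
    show (if (j:ℕ) < c then Y i j else 0) = Y i j
    rw [if_pos h.2]
  · rw [if_neg h, if_neg h]

/-- with the zero-padded MOSES iterates `Ŷ_{k,r} ∈ ℝ^{n×Kb}`,
row spaces `Q̂_{k,r} = span(Ŷ_{k,r}*)`, coordinate subspaces `I_k` (coordinates
`(k−1)b+1 … kb`), `J_k = I_1 ⊕ … ⊕ I_k`, and `Q̃_k = Q̂_{k−1,r} ⊕ I_k`, for every
`k ∈ [1:K]`: `Ŷ_{k,r} = Y_K P_{Q̂_{k,r}}`; equivalently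
`Ŷ_{k−1,r} + Y_k P_{I_k} = Y_K P_{Q̃_k}`; the update rule can be written as
`Y_K P_{Q̂_{k,r}} = SVD_r(Y_K P_{Q̃_k})` for `k ∈ [2:K]`; and `Q̂_{k,r} ⊆ Q̃_k ⊆ J_k`. -/
theorem stmt7 (n M r b K : ℕ) (hM : M = K * b)
    (Y : Matrix (Fin n) (Fin M) ℝ)
    (Yhat : ℕ → Matrix (Fin n) (Fin M) ℝ) (hmoses : IsMOSES r b K Y Yhat) :
    ∀ k, 1 ≤ k → k ≤ K →
      Yhat k = Y * projMatrix (rowSpan (Yhat k)) ∧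
      Yhat (k - 1) + padTrunc Y (k * b) * projMatrix (coordSubspace ((k - 1) * b) (k * b)) =
        Y * projMatrix (rowSpan (Yhat (k - 1)) ⊔ coordSubspace ((k - 1) * b) (k * b)) ∧
      (2 ≤ k → IsTruncSVD r
        (Y * projMatrix (rowSpan (Yhat (k - 1)) ⊔ coordSubspace ((k - 1) * b) (k * b)))
        (Y * projMatrix (rowSpan (Yhat k)))) ∧
      rowSpan (Yhat k) ≤ rowSpan (Yhat (k - 1)) ⊔ coordSubspace ((k - 1) * b) (k * b) ∧
      rowSpan (Yhat (k - 1)) ⊔ coordSubspace ((k - 1) * b) (k * b) ≤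
        coordSubspace 0 (k * b) := by
  obtain ⟨h0, hstep⟩ := hmoses
  have key : ∀ k, k ≤ K → Yhat k = Y * projMatrix (rowSpan (Yhat k)) ∧
      rowSpan (Yhat k) ≤ coordSubspace 0 (k * b) := by
    intro k
    induction k with
    | zero =>
      intro _
      rw [h0, rowSpan_zero, projMatrix_bot, Matrix.mul_zero]
      exact ⟨rfl, bot_le⟩
    | succ m ih =>
      intro hm1
      obtain ⟨ih1, ih2⟩ := ih (le_trans (Nat.le_succ m) hm1)
      have hsvd := hstep (m+1) (Nat.succ_le_succ (Nat.zero_le m)) hm1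
      simp only [Nat.add_sub_cancel] at hsvd
      have hortho : rowSpan (Yhat m) ⟂ coordSubspace (m*b) ((m+1)*b) :=
        (coord_ortho (m*b) ((m+1)*b)).mono_left ih2
      have hA : Yhat m + (padTrunc Y ((m+1)*b) - padTrunc Y (m*b))
          = Y * projMatrix (rowSpan (Yhat m) ⊔ coordSubspace (m*b) ((m+1)*b)) := by
        rw [pad_diff Y (m*b) ((m+1)*b) (Nat.mul_le_mul_right b (Nat.le_succ m)),
          projMatrix_sup_of_ortho hortho, Matrix.mul_add, ← ih1]
        rfl
      rw [hA] at hsvd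
      have hAP : (Y * projMatrix (rowSpan (Yhat m) ⊔ coordSubspace (m*b) ((m+1)*b)))
            * projMatrix (rowSpan (Yhat m) ⊔ coordSubspace (m*b) ((m+1)*b))
          = Y * projMatrix (rowSpan (Yhat m) ⊔ coordSubspace (m*b) ((m+1)*b)) := by
        rw [Matrix.mul_assoc, projMatrix_idem]
      have habs := truncSVD_absorb hAP hsvd
      have hle : rowSpan (Yhat (m+1)) ≤ rowSpan (Yhat m) ⊔ coordSubspace (m*b) ((m+1)*b) :=
        (rowSpan_le_iff _ _).2 habs
      have hB := truncSVD_eq_proj hsvd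
      refine ⟨?_, ?_⟩
      · calc Yhat (m+1)
            = (Y * projMatrix (rowSpan (Yhat m) ⊔ coordSubspace (m*b) ((m+1)*b)))
              * projMatrix (rowSpan (Yhat (m+1))) := hB.symm
          _ = Y * (projMatrix (rowSpan (Yhat m) ⊔ coordSubspace (m*b) ((m+1)*b))
              * projMatrix (rowSpan (Yhat (m+1)))) := Matrix.mul_assoc _ _ _
          _ = Y * projMatrix (rowSpan (Yhat (m+1))) := by
              rw [projMatrix_mul_projMatrix hle]
      · exact hle.trans (sup_le
          (ih2.trans (coordSubspace_mono (Nat.mul_le_mul_right b (Nat.le_succ m))))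
          (coordSubspace_mono_left (Nat.zero_le _)))
  intro k hk1 hkK
  obtain ⟨m, rfl⟩ : ∃ m, k = m + 1 := ⟨k - 1, (Nat.succ_pred_eq_of_pos hk1).symm⟩
  simp only [Nat.add_sub_cancel]
  obtain ⟨g1, _⟩ := key (m+1) hkK
  obtain ⟨p1, p2⟩ := key m (le_trans (Nat.le_succ m) hkK)
  have hsvd := hstep (m+1) (Nat.succ_le_succ (Nat.zero_le m)) hkK
  simp only [Nat.add_sub_cancel] at hsvd
  have hortho : rowSpan (Yhat m) ⟂ coordSubspace (m*b) ((m+1)*b) :=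
    (coord_ortho (m*b) ((m+1)*b)).mono_left p2
  have hA : Yhat m + (padTrunc Y ((m+1)*b) - padTrunc Y (m*b))
      = Y * projMatrix (rowSpan (Yhat m) ⊔ coordSubspace (m*b) ((m+1)*b)) := by
    rw [pad_diff Y (m*b) ((m+1)*b) (Nat.mul_le_mul_right b (Nat.le_succ m)),
      projMatrix_sup_of_ortho hortho, Matrix.mul_add, ← p1]
    rfl
  rw [hA] at hsvd
  have hAP : (Y * projMatrix (rowSpan (Yhat m) ⊔ coordSubspace (m*b) ((m+1)*b)))
        * projMatrix (rowSpan (Yhat m) ⊔ coordSubspace (m*b) ((m+1)*b))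
      = Y * projMatrix (rowSpan (Yhat m) ⊔ coordSubspace (m*b) ((m+1)*b)) := by
    rw [Matrix.mul_assoc, projMatrix_idem]
  have habs := truncSVD_absorb hAP hsvd
  have hle : rowSpan (Yhat (m+1)) ≤ rowSpan (Yhat m) ⊔ coordSubspace (m*b) ((m+1)*b) :=
    (rowSpan_le_iff _ _).2 habs
  refine ⟨g1, ?_, ?_, hle, ?_⟩
  · rw [show Yhat m + padTrunc Y ((m+1)*b) * projMatrix (coordSubspace (m*b) ((m+1)*b))
        = Yhat m + Y * projMatrix (coordSubspace (m*b) ((m+1)*b)) from congrArg (Yhat m + ·) (pad_mul_coord _ _ _),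
      projMatrix_sup_of_ortho hortho, Matrix.mul_add, ← p1]
    rfl
  · intro _
    rw [← g1]
    exact hsvd
  · exact sup_le
      (p2.trans (coordSubspace_mono (Nat.mul_le_mul_right b (Nat.le_succ m))))
      (coordSubspace_mono_left (Nat.zero_le _))
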